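/- Let F̂: ℝ^d → ℝ^d be a lift of a torus map, F̂(z) = Mz + G(z), such that F̂ is a homeomorphism of ℝ^d and both M and M^{−1} have integer entries. Suppose P∘M = A∘P where P is the projection onto the first k coordinates, and A is a k×k block-diagonal hyperbolic matrix A = A_u ⊕ A_s, where A_u is k_u×k_u invertible with ‖A_u^{−1}‖ < 1, A_s is k_s×k_s with ‖A_s‖ < 1, and k = k_u + k_s. Write P_u, P_s for the compositions of P with the projections of ℝ^k onto the first k_u and last k_s coordinates. Then the map Φ̂(z) := ( lim_{n→∞} A_u^{−n} P_u(F̂^{n}(z)) , lim_{n→∞} A_s^{n} P_s(F̂^{−n}(z)) ) ∈ ℝ^k is well defined and continuous, satisfies Φ̂(F̂(z)) = A·Φ̂(z) for all z ∈ ℝ^d, and satisfies Φ̂(z + p) = Φ̂(z) + P p for all z ∈ ℝ^d and p ∈ ℤ^d; hence F̂ descends to a torus map semi-conjugate to the linear torus map θ ↦ Aθ mod 1 on ℝ^k/ℤ^k. -/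

import Mathlib

open Filter Topology

noncomputable section

/-- Reinterpret a vector `Fin d → ℝ` as a point of Euclidean space `ℝ^d`. -/
def toEuc (d : ℕ) (v : Fin d → ℝ) : EuclideanSpace ℝ (Fin d) := WithLp.toLp 2 v

/-- Projection onto the first `k` coordinates of `ℝ^d`. -/
def projP (d k : ℕ) (h : k ≤ d) (z : EuclideanSpace ℝ (Fin d)) :
    EuclideanSpace ℝ (Fin k) :=
  WithLp.toLp 2 fun (i : Fin k) => z (Fin.castLE h i)

/-- Projection onto the last `d - k` coordinates of `ℝ^d`. -/
def projQ (d k : ℕ) (h : k ≤ d) (z : EuclideanSpace ℝ (Fin d)) :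
    EuclideanSpace ℝ (Fin (d - k)) :=
  WithLp.toLp 2 fun (j : Fin (d - k)) => z ⟨k + j.val, by have := j.isLt; omega⟩

/-- The canonical projection `ℝ^n → ℝ^n/ℤ^n` (the `n`-torus), coordinatewise `mod 1`. -/
def torusProj (n : ℕ) (z : EuclideanSpace ℝ (Fin n)) : Fin n → AddCircle (1 : ℝ) :=
  fun i => ((z i : ℝ) : AddCircle (1 : ℝ))

/-- coordinate-selection continuous linear map -/
def selCLM (n m : ℕ) (e : Fin m → Fin n) :
    EuclideanSpace ℝ (Fin n) →L[ℝ] EuclideanSpace ℝ (Fin m) :=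
  LinearMap.toContinuousLinearMap
    { toFun := fun z => (WithLp.toLp 2 fun i => z (e i) : EuclideanSpace ℝ (Fin m))
      map_add' := fun a b => rfl
      map_smul' := fun c a => rfl }

example (d k ku : ℕ) (hku : ku ≤ k) (hkd : k ≤ d) (z : EuclideanSpace ℝ (Fin d)) :
    selCLM d ku (fun i => Fin.castLE hkd (Fin.castLE hku i)) z
      = projP k ku hku (projP d k hkd z) := rfl

example (d k ku : ℕ) (hku : ku ≤ k) (hkd : k ≤ d) (z : EuclideanSpace ℝ (Fin d)) :
    selCLM d (k - ku) (fun j => Fin.castLE hkd ⟨ku + j.val, by have := j.isLt; omega⟩) z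
      = projQ k ku hku (projP d k hkd z) := rfl

/-- integer vector -/
def ivec (n : ℕ) (p : Fin n → ℤ) : EuclideanSpace ℝ (Fin n) := toEuc n fun i => (p i : ℝ)

lemma limit_aux {X : Type*} [TopologicalSpace X] {E : Type*} [NormedAddCommGroup E]
    [CompleteSpace E] (u : ℕ → X → E) (hc : ∀ n, Continuous (u n)) (C r : ℝ)
    (hr0 : 0 ≤ r) (hr : r < 1)
    (hb : ∀ n x, dist (u n x) (u (n+1) x) ≤ C * r ^ n) :
    ∃ Φ : X → E, (∀ x, Tendsto (fun n => u n x) atTop (𝓝 (Φ x))) ∧ Continuous Φ := by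
  have hcau : ∀ x, CauchySeq fun n => u n x :=
    fun x => cauchySeq_of_le_geometric r C hr (fun n => hb n x)
  choose Φ hΦ using fun x => cauchySeq_tendsto_of_complete (hcau x)
  refine ⟨Φ, hΦ, ?_⟩
  have hdist : ∀ (n : ℕ) x, dist (u n x) (Φ x) ≤ C * r ^ n / (1 - r) := fun n x =>
    dist_le_of_le_geometric_of_tendsto r C hr (fun m => hb m x) (hΦ x) n
  have hUnif : TendstoUniformly u Φ atTop := by
    rw [Metric.tendstoUniformly_iff]
    intro ε hε
    have h0 : Tendsto (fun n : ℕ => C / (1 - r) * r ^ n) atTop (𝓝 0) := by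
      simpa using (tendsto_pow_atTop_nhds_zero_of_lt_one hr0 hr).const_mul (C / (1-r))
    filter_upwards [h0.eventually (gt_mem_nhds hε)] with n hn x
    calc dist (Φ x) (u n x) = dist (u n x) (Φ x) := dist_comm _ _
      _ ≤ C * r ^ n / (1 - r) := hdist n x
      _ = C / (1 - r) * r ^ n := by ring
      _ < ε := hn
  exact hUnif.continuous (Eventually.of_forall hc).frequently

lemma torus_add_int (n : ℕ) (z : EuclideanSpace ℝ (Fin n)) (p : Fin n → ℤ) :
    torusProj n (z + ivec n p) = torusProj n z := by
  funext i
  show (((z + ivec n p) i : ℝ) : AddCircle (1:ℝ)) = ((z i : ℝ) : AddCircle (1:ℝ))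
  have h : (z + ivec n p) i = z i + (p i : ℝ) := by simp [ivec, toEuc]
  rw [h]
  symm
  exact QuotientAddGroup.eq.mpr ⟨p i, by simp⟩

lemma torus_eq_exists (n : ℕ) (z z' : EuclideanSpace ℝ (Fin n))
    (h : torusProj n z' = torusProj n z) : ∃ p : Fin n → ℤ, z = z' + ivec n p := by
  have h' : ∀ i, ∃ m : ℤ, z i - z' i = (m : ℝ) := by
    intro i
    have := congrFun h i
    have h2 : -(z' i) + z i ∈ AddSubgroup.zmultiples (1:ℝ) := QuotientAddGroup.eq.mp this
    obtain ⟨m, hm⟩ := AddSubgroup.mem_zmultiples_iff.mp h2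
    exact ⟨m, by simp at hm; linarith⟩
  choose p hp using h'
  refine ⟨p, PiLp.ext fun i => ?_⟩
  have : (z' + ivec n p) i = z' i + (p i : ℝ) := by simp [ivec, toEuc]
  rw [this, ← hp i]; ring

/-- lift a torus point -/
def tlift (n : ℕ) (θ : Fin n → AddCircle (1:ℝ)) : EuclideanSpace ℝ (Fin n) :=
  WithLp.toLp 2 fun i => (θ i).out

lemma torusProj_tlift (n : ℕ) (θ : Fin n → AddCircle (1:ℝ)) :
    torusProj n (tlift n θ) = θ := funext fun i => QuotientAddGroup.out_eq' (θ i)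

lemma pow_apply_norm_le_equiv {E : Type*} [NormedAddCommGroup E] [NormedSpace ℝ E]
    (e : E ≃L[ℝ] E) (n : ℕ) (x : E) :
    ‖(e ^ n) x‖ ≤ ‖(e : E →L[ℝ] E)‖ ^ n * ‖x‖ := by
  induction n generalizing x with
  | zero => simp; exact le_of_eq rfl
  | succ n ih =>
    have h1 : (e ^ (n+1)) x = (e ^ n) (e x) := by rw [pow_succ]; rfl
    rw [h1, pow_succ]
    calc ‖(e ^ n) (e x)‖ ≤ ‖(e : E →L[ℝ] E)‖ ^ n * ‖e x‖ := ih (e x)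
      _ ≤ ‖(e : E →L[ℝ] E)‖ ^ n * (‖(e : E →L[ℝ] E)‖ * ‖x‖) := by
          exact mul_le_mul_of_nonneg_left ((e : E →L[ℝ] E).le_opNorm x)
            (pow_nonneg (norm_nonneg _) n)
      _ = ‖(e : E →L[ℝ] E)‖ ^ n * ‖(e : E →L[ℝ] E)‖ * ‖x‖ := by ring

lemma pow_apply_norm_le_clm {E : Type*} [NormedAddCommGroup E] [NormedSpace ℝ E]
    (T : E →L[ℝ] E) (n : ℕ) (x : E) : ‖(T ^ n) x‖ ≤ ‖T‖ ^ n * ‖x‖ := by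
  induction n generalizing x with
  | zero => simp [ContinuousLinearMap.one_apply]
  | succ n ih =>
    have h1 : (T ^ (n+1)) x = (T ^ n) (T x) := by rw [pow_succ]; rfl
    rw [h1, pow_succ]
    calc ‖(T ^ n) (T x)‖ ≤ ‖T‖ ^ n * ‖T x‖ := ih (T x)
      _ ≤ ‖T‖ ^ n * (‖T‖ * ‖x‖) :=
          mul_le_mul_of_nonneg_left (T.le_opNorm x) (pow_nonneg (norm_nonneg _) n)
      _ = ‖T‖ ^ n * ‖T‖ * ‖x‖ := by ring

lemma equiv_pow_symm_pow {E : Type*} [NormedAddCommGroup E] [NormedSpace ℝ E]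
    (e : E ≃L[ℝ] E) (n : ℕ) (x : E) : (e.symm ^ n) ((e ^ n) x) = x := by
  induction n generalizing x with
  | zero => rfl
  | succ n ih =>
    have h1 : (e ^ (n+1)) x = (e ^ n) (e x) := by rw [pow_succ]; rfl
    have h2 : ∀ y, (e.symm ^ (n+1)) y = e.symm ((e.symm ^ n) y) := by
      intro y; rw [pow_succ']; rfl
    rw [h1, h2, ih (e x), e.symm_apply_apply]

/--
Let `F̂ : ℝ^d → ℝ^d` be a lift of a torus map, `F̂(z) = Mz + G(z)`, such
that `F̂` is a homeomorphism of `ℝ^d` and both `M` and `M⁻¹` have integer entries. Suppose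
`P∘M = A∘P` where `P` is the projection onto the first `k` coordinates and
`A = A_u ⊕ A_s` is block-diagonal hyperbolic, with `A_u` a `k_u×k_u` invertible block with
`‖A_u⁻¹‖ < 1` and `A_s` a `k_s×k_s` block with `‖A_s‖ < 1` (`k = k_u + k_s`; `P_u`, `P_s`
are the compositions of `P` with the projections onto the first `k_u` and last `k_s`
coordinates of `ℝ^k`). Then
`Φ̂(z) := (lim_{n→∞} A_u^{−n} P_u(F̂ⁿ(z)), lim_{n→∞} A_sⁿ P_s(F̂^{−n}(z))) ∈ ℝ^k` is well
defined and continuous, satisfies `Φ̂(F̂ z) = A·Φ̂(z)` and `Φ̂(z + p) = Φ̂(z) + P p` for all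
`z ∈ ℝ^d`, `p ∈ ℤ^d`; hence `F̂` descends to a torus map semi-conjugate to the linear
torus map `θ ↦ Aθ mod 1` on `ℝ^k/ℤ^k`.
-/
theorem stmt7 (d k ku : ℕ) (hku : ku ≤ k) (hkd : k ≤ d)
    (M : Matrix (Fin d) (Fin d) ℝ) (hMint : ∀ i j, ∃ n : ℤ, M i j = (n : ℝ))
    (hMinv : ∃ N : Matrix (Fin d) (Fin d) ℝ,
      (∀ i j, ∃ n : ℤ, N i j = (n : ℝ)) ∧ M * N = 1 ∧ N * M = 1)
    (G : EuclideanSpace ℝ (Fin d) → EuclideanSpace ℝ (Fin d))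
    (hGcont : Continuous G) (hGbdd : ∃ C, ∀ z, ‖G z‖ ≤ C)
    (hGper : ∀ (z : EuclideanSpace ℝ (Fin d)) (p : Fin d → ℤ),
      G (z + toEuc d fun i => (p i : ℝ)) = G z)
    (F : EuclideanSpace ℝ (Fin d) ≃ₜ EuclideanSpace ℝ (Fin d))
    (hF : ∀ z, F z = toEuc d (M.mulVec z) + G z)
    (Au : EuclideanSpace ℝ (Fin ku) ≃L[ℝ] EuclideanSpace ℝ (Fin ku))
    (hAu : ‖(Au.symm : EuclideanSpace ℝ (Fin ku) →L[ℝ] EuclideanSpace ℝ (Fin ku))‖ < 1)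
    (As : EuclideanSpace ℝ (Fin (k - ku)) →L[ℝ] EuclideanSpace ℝ (Fin (k - ku)))
    (hAs : ‖As‖ < 1)
    (hPuM : ∀ z : EuclideanSpace ℝ (Fin d),
      projP k ku hku (projP d k hkd (toEuc d (M.mulVec z)))
        = Au (projP k ku hku (projP d k hkd z)))
    (hPsM : ∀ z : EuclideanSpace ℝ (Fin d),
      projQ k ku hku (projP d k hkd (toEuc d (M.mulVec z)))
        = As (projQ k ku hku (projP d k hkd z))) :
    ∃ (Φu : EuclideanSpace ℝ (Fin d) → EuclideanSpace ℝ (Fin ku))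
      (Φs : EuclideanSpace ℝ (Fin d) → EuclideanSpace ℝ (Fin (k - ku))),
      (∀ z, Tendsto (fun n : ℕ =>
          (Au.symm ^ n) (projP k ku hku (projP d k hkd (F^[n] z))))
        atTop (𝓝 (Φu z))) ∧
      (∀ z, Tendsto (fun n : ℕ =>
          (As ^ n) (projQ k ku hku (projP d k hkd (F.symm^[n] z))))
        atTop (𝓝 (Φs z))) ∧
      Continuous Φu ∧ Continuous Φs ∧
      (∀ z, Φu (F z) = Au (Φu z)) ∧
      (∀ z, Φs (F z) = As (Φs z)) ∧
      (∀ (z : EuclideanSpace ℝ (Fin d)) (p : Fin d → ℤ),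
        Φu (z + toEuc d fun i => (p i : ℝ))
          = Φu z + projP k ku hku (projP d k hkd (toEuc d fun i => (p i : ℝ)))) ∧
      (∀ (z : EuclideanSpace ℝ (Fin d)) (p : Fin d → ℤ),
        Φs (z + toEuc d fun i => (p i : ℝ))
          = Φs z + projQ k ku hku (projP d k hkd (toEuc d fun i => (p i : ℝ)))) ∧
      -- hence `F̂` descends to a torus map semi-conjugate to `θ ↦ Aθ mod 1`:
      ∃ (Fbar : (Fin d → AddCircle (1 : ℝ)) → (Fin d → AddCircle (1 : ℝ)))
        (Φbar : (Fin d → AddCircle (1 : ℝ)) →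
          (Fin ku → AddCircle (1 : ℝ)) × (Fin (k - ku) → AddCircle (1 : ℝ)))
        (Abar : (Fin ku → AddCircle (1 : ℝ)) × (Fin (k - ku) → AddCircle (1 : ℝ)) →
          (Fin ku → AddCircle (1 : ℝ)) × (Fin (k - ku) → AddCircle (1 : ℝ))),
        (∀ z, Fbar (torusProj d z) = torusProj d (F z)) ∧
        (∀ z, Φbar (torusProj d z) = (torusProj ku (Φu z), torusProj (k - ku) (Φs z))) ∧
        (∀ (x : EuclideanSpace ℝ (Fin ku)) (y : EuclideanSpace ℝ (Fin (k - ku))),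
          Abar (torusProj ku x, torusProj (k - ku) y)
            = (torusProj ku (Au x), torusProj (k - ku) (As y))) ∧
        (∀ θ, Φbar (Fbar θ) = Abar (Φbar θ)) := by
  -- Setup
  obtain ⟨N, hNint, hMN, _hNM⟩ := hMinv
  obtain ⟨CG0, hCG0⟩ := hGbdd
  set CG : ℝ := max CG0 0 with hCGdef
  have hCG : ∀ z, ‖G z‖ ≤ CG := fun z => le_trans (hCG0 z) (le_max_left _ _)
  have hCGnn : (0:ℝ) ≤ CG := le_max_right _ _
  set Pu : EuclideanSpace ℝ (Fin d) →L[ℝ] EuclideanSpace ℝ (Fin ku) :=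
    selCLM d ku (fun i => Fin.castLE hkd (Fin.castLE hku i)) with hPudef
  set Ps : EuclideanSpace ℝ (Fin d) →L[ℝ] EuclideanSpace ℝ (Fin (k - ku)) :=
    selCLM d (k - ku) (fun j => Fin.castLE hkd ⟨ku + j.val, by have := j.isLt; omega⟩)
    with hPsdef
  have hPu : ∀ z, Pu z = projP k ku hku (projP d k hkd z) := fun _ => rfl
  have hPs : ∀ z, Ps z = projQ k ku hku (projP d k hkd z) := fun _ => rfl
  have hPuM' : ∀ z : EuclideanSpace ℝ (Fin d), Pu (toEuc d (M.mulVec z)) = Au (Pu z) := fun z => hPuM z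
  have hPsM' : ∀ z : EuclideanSpace ℝ (Fin d), Ps (toEuc d (M.mulVec z)) = As (Ps z) := fun z => hPsM z
  -- integer matrices map integer vectors to integer vectors
  choose mint hmint using hMint
  choose nint hnint using hNint
  have hMq : ∀ p : Fin d → ℤ, toEuc d (M.mulVec (ivec d p))
      = ivec d (fun i => ∑ j, mint i j * p j) := by
    intro p
    ext i
    show M.mulVec (ivec d p) i = ((∑ j, mint i j * p j : ℤ) : ℝ)
    have h1 : M.mulVec (ivec d p) i = ∑ j, (mint i j : ℝ) * (p j : ℝ) := by
      simp only [Matrix.mulVec, dotProduct]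
      exact Finset.sum_congr rfl fun j _ => by rw [hmint]; rfl
    rw [h1]; push_cast; rfl
  have hNq : ∀ p : Fin d → ℤ, toEuc d (N.mulVec (ivec d p))
      = ivec d (fun i => ∑ j, nint i j * p j) := by
    intro p
    ext i
    show N.mulVec (ivec d p) i = ((∑ j, nint i j * p j : ℤ) : ℝ)
    have h1 : N.mulVec (ivec d p) i = ∑ j, (nint i j : ℝ) * (p j : ℝ) := by
      simp only [Matrix.mulVec, dotProduct]
      exact Finset.sum_congr rfl fun j _ => by rw [hnint]; rfl
    rw [h1]; push_cast; rfl
  -- translation behaviour of F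
  have hFadd : ∀ w (p : Fin d → ℤ),
      F (w + ivec d p) = F w + toEuc d (M.mulVec (ivec d p)) := by
    intro w p
    rw [hF, hF]
    have hG : G (w + ivec d p) = G w := hGper w p
    have hMv : M.mulVec (w + ivec d p) = M.mulVec w + M.mulVec (ivec d p) :=
      Matrix.mulVec_add M w (ivec d p)
    show toEuc d (M.mulVec (w + ivec d p)) + G (w + ivec d p)
        = toEuc d (M.mulVec w) + G w + toEuc d (M.mulVec (ivec d p))
    rw [hG, hMv]
    have hsplit : toEuc d (M.mulVec w + M.mulVec (ivec d p))
        = toEuc d (M.mulVec w) + toEuc d (M.mulVec (ivec d p)) := rfl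
    rw [hsplit]
    abel
  have hFsymmAdd : ∀ z (p : Fin d → ℤ), ∃ q : Fin d → ℤ,
      F.symm (z + ivec d p) = F.symm z + ivec d q ∧
      toEuc d (M.mulVec (ivec d q)) = ivec d p := by
    intro z p
    refine ⟨fun i => ∑ j, nint i j * p j, ?_, ?_⟩
    · have hMNq : toEuc d (M.mulVec (ivec d (fun i => ∑ j, nint i j * p j))) = ivec d p := by
        rw [← hNq]
        show toEuc d (M.mulVec (N.mulVec (ivec d p))) = ivec d p
        rw [Matrix.mulVec_mulVec, hMN, Matrix.one_mulVec]
        rfl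
      have h2 : F (F.symm z + ivec d (fun i => ∑ j, nint i j * p j)) = z + ivec d p := by
        rw [hFadd, hMNq, F.apply_symm_apply]
      calc F.symm (z + ivec d p)
          = F.symm (F (F.symm z + ivec d (fun i => ∑ j, nint i j * p j))) := by rw [h2]
        _ = F.symm z + ivec d (fun i => ∑ j, nint i j * p j) := F.symm_apply_apply _
    · rw [← hNq]
      show toEuc d (M.mulVec (N.mulVec (ivec d p))) = ivec d p
      rw [Matrix.mulVec_mulVec, hMN, Matrix.one_mulVec]
      rfl
  -- iterated translation for F
  have hIterF : ∀ (n : ℕ) z (p : Fin d → ℤ), ∃ q : Fin d → ℤ,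
      F^[n] (z + ivec d p) = F^[n] z + ivec d q ∧
      Pu (ivec d q) = (Au ^ n) (Pu (ivec d p)) := by
    intro n
    induction n with
    | zero => exact fun z p => ⟨p, rfl, by simp; rfl⟩
    | succ n ih =>
      intro z p
      obtain ⟨q, hq1, hq2⟩ := ih z p
      refine ⟨fun i => ∑ j, mint i j * q j, ?_, ?_⟩
      · rw [Function.iterate_succ_apply', Function.iterate_succ_apply', hq1, hFadd, hMq]
      · rw [← hMq, hPuM', hq2]
        have : (Au ^ (n+1)) (Pu (ivec d p)) = Au ((Au ^ n) (Pu (ivec d p))) := by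
          rw [pow_succ']; rfl
        rw [this]
  -- iterated translation for F.symm
  have hIterFsymm : ∀ (n : ℕ) z (p : Fin d → ℤ), ∃ q : Fin d → ℤ,
      F.symm^[n] (z + ivec d p) = F.symm^[n] z + ivec d q ∧
      (As ^ n) (Ps (ivec d q)) = Ps (ivec d p) := by
    intro n
    induction n with
    | zero => exact fun z p => ⟨p, rfl, by simp⟩
    | succ n ih =>
      intro z p
      obtain ⟨q₁, hq1, hq2⟩ := hFsymmAdd z p
      obtain ⟨q₂, hq3, hq4⟩ := ih (F.symm z) q₁
      refine ⟨q₂, ?_, ?_⟩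
      · rw [Function.iterate_succ_apply, Function.iterate_succ_apply, hq1, hq3]
      · have h5 : (As ^ (n+1)) (Ps (ivec d q₂)) = As ((As ^ n) (Ps (ivec d q₂))) := by
          rw [pow_succ']; rfl
        rw [h5, hq4, ← hq2, hPsM']
  -- one-step recurrences
  have hPuF : ∀ z, Pu (F z) = Au (Pu z) + Pu (G z) := by
    intro z; rw [hF, map_add, hPuM']
  have hPsF : ∀ z, Ps (F z) = As (Ps z) + Ps (G z) := by
    intro z; rw [hF, map_add, hPsM']
  set ru : ℝ := ‖(Au.symm : EuclideanSpace ℝ (Fin ku) →L[ℝ] EuclideanSpace ℝ (Fin ku))‖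
    with hrudef
  have hru0 : 0 ≤ ru := norm_nonneg _
  have hrs0 : 0 ≤ ‖As‖ := norm_nonneg _
  -- construct Φu
  have hustep : ∀ (n : ℕ) z,
      (Au.symm ^ (n+1)) (Pu (F^[n+1] z))
        = (Au.symm ^ n) (Pu (F^[n] z)) + (Au.symm ^ (n+1)) (Pu (G (F^[n] z))) := by
    intro n z
    rw [Function.iterate_succ_apply', hPuF, map_add]
    congr 1
    show (Au.symm ^ n) (Au.symm (Au (Pu (F^[n] z)))) = _
    rw [Au.symm_apply_apply]
  obtain ⟨Φu, hΦu, hΦuc⟩ := limit_aux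
      (fun (n : ℕ) z => (Au.symm ^ n) (Pu (F^[n] z)))
      (fun n => (Au.symm ^ n).continuous.comp (Pu.continuous.comp (F.continuous.iterate n)))
      (ru * (‖Pu‖ * CG)) ru hru0 hAu
      (by
        intro n z
        show dist ((Au.symm ^ n) (Pu (F^[n] z))) ((Au.symm ^ (n+1)) (Pu (F^[n+1] z)))
          ≤ ru * (‖Pu‖ * CG) * ru ^ n
        rw [dist_eq_norm, hustep n z]
        have h1 : (Au.symm ^ n) (Pu (F^[n] z))
            - ((Au.symm ^ n) (Pu (F^[n] z)) + (Au.symm ^ (n+1)) (Pu (G (F^[n] z))))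
            = -((Au.symm ^ (n+1)) (Pu (G (F^[n] z)))) := by abel
        rw [h1, norm_neg]
        calc ‖(Au.symm ^ (n+1)) (Pu (G (F^[n] z)))‖
            ≤ ru ^ (n+1) * ‖Pu (G (F^[n] z))‖ := pow_apply_norm_le_equiv _ _ _
          _ ≤ ru ^ (n+1) * (‖Pu‖ * CG) := by
              apply mul_le_mul_of_nonneg_left _ (pow_nonneg hru0 _)
              calc ‖Pu (G (F^[n] z))‖ ≤ ‖Pu‖ * ‖G (F^[n] z)‖ := Pu.le_opNorm _
                _ ≤ ‖Pu‖ * CG := mul_le_mul_of_nonneg_left (hCG _) (norm_nonneg _)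
          _ = ru * (‖Pu‖ * CG) * ru ^ n := by ring)
  -- construct Φs
  have hvstep : ∀ (n : ℕ) z,
      (As ^ n) (Ps (F.symm^[n] z))
        = (As ^ (n+1)) (Ps (F.symm^[n+1] z)) + (As ^ n) (Ps (G (F.symm^[n+1] z))) := by
    intro n z
    have h0 : F.symm^[n] z = F (F.symm^[n+1] z) := by
      rw [Function.iterate_succ_apply', F.apply_symm_apply]
    have hps : (As ^ (n+1)) (Ps (F.symm^[n+1] z))
        = (As ^ n) (As (Ps (F.symm^[n+1] z))) := rfl
    rw [h0, hPsF, map_add, hps]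
  obtain ⟨Φs, hΦs, hΦsc⟩ := limit_aux
      (fun (n : ℕ) z => (As ^ n) (Ps (F.symm^[n] z)))
      (fun n => (As ^ n).continuous.comp
        (Ps.continuous.comp ((F.symm).continuous.iterate n)))
      (‖Ps‖ * CG) ‖As‖ hrs0 hAs
      (by
        intro n z
        show dist ((As ^ n) (Ps (F.symm^[n] z))) ((As ^ (n+1)) (Ps (F.symm^[n+1] z)))
          ≤ ‖Ps‖ * CG * ‖As‖ ^ n
        rw [dist_eq_norm, hvstep n z]
        have h1 : ((As ^ (n+1)) (Ps (F.symm^[n+1] z)) + (As ^ n) (Ps (G (F.symm^[n+1] z))))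
            - (As ^ (n+1)) (Ps (F.symm^[n+1] z)) = (As ^ n) (Ps (G (F.symm^[n+1] z))) := by
          abel
        rw [h1]
        calc ‖(As ^ n) (Ps (G (F.symm^[n+1] z)))‖
            ≤ ‖As‖ ^ n * ‖Ps (G (F.symm^[n+1] z))‖ := pow_apply_norm_le_clm _ _ _
          _ ≤ ‖As‖ ^ n * (‖Ps‖ * CG) := by
              apply mul_le_mul_of_nonneg_left _ (pow_nonneg hrs0 _)
              calc ‖Ps (G (F.symm^[n+1] z))‖ ≤ ‖Ps‖ * ‖G (F.symm^[n+1] z)‖ := Ps.le_opNorm _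
                _ ≤ ‖Ps‖ * CG := mul_le_mul_of_nonneg_left (hCG _) (norm_nonneg _)
          _ = ‖Ps‖ * CG * ‖As‖ ^ n := by ring)
  -- equivariance
  have hΦuF : ∀ z, Φu (F z) = Au (Φu z) := by
    intro z
    have h1 : ∀ n : ℕ, (Au.symm ^ n) (Pu (F^[n] (F z)))
        = Au ((Au.symm ^ (n+1)) (Pu (F^[n+1] z))) := by
      intro n
      have hpow : (Au.symm ^ (n+1)) (Pu (F^[n+1] z))
          = Au.symm ((Au.symm ^ n) (Pu (F^[n+1] z))) := by
        rw [pow_succ']; rfl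
      rw [hpow, Au.apply_symm_apply, Function.iterate_succ_apply]
    have h2 : Tendsto (fun n : ℕ => (Au.symm ^ n) (Pu (F^[n] (F z)))) atTop
        (𝓝 (Au (Φu z))) := by
      simp only [h1]
      exact (Au.continuous.tendsto _).comp ((hΦu z).comp (tendsto_add_atTop_nat 1))
    exact tendsto_nhds_unique (hΦu (F z)) h2
  have hΦsF : ∀ z, Φs (F z) = As (Φs z) := by
    intro z
    have h1 : ∀ n : ℕ, (As ^ (n+1)) (Ps (F.symm^[n+1] (F z)))
        = As ((As ^ n) (Ps (F.symm^[n] z))) := by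
      intro n
      rw [Function.iterate_succ_apply, F.symm_apply_apply]
      show _ = (As * As ^ n) (Ps (F.symm^[n] z))
      rw [← pow_succ']
    have h2 : Tendsto (fun n : ℕ => (As ^ (n+1)) (Ps (F.symm^[n+1] (F z)))) atTop
        (𝓝 (Φs (F z))) := (hΦs (F z)).comp (tendsto_add_atTop_nat 1)
    have h3 : Tendsto (fun n : ℕ => (As ^ (n+1)) (Ps (F.symm^[n+1] (F z)))) atTop
        (𝓝 (As (Φs z))) := by
      simp only [h1]
      exact (As.continuous.tendsto _).comp (hΦs z)
    exact tendsto_nhds_unique h2 h3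
  -- periodicity
  have hΦuP : ∀ z (p : Fin d → ℤ), Φu (z + ivec d p) = Φu z + Pu (ivec d p) := by
    intro z p
    have h1 : ∀ n : ℕ, (Au.symm ^ n) (Pu (F^[n] (z + ivec d p)))
        = (Au.symm ^ n) (Pu (F^[n] z)) + Pu (ivec d p) := by
      intro n
      obtain ⟨q, hq1, hq2⟩ := hIterF n z p
      rw [hq1, map_add, map_add, hq2, equiv_pow_symm_pow]
    have h2 : Tendsto (fun n : ℕ => (Au.symm ^ n) (Pu (F^[n] (z + ivec d p)))) atTop
        (𝓝 (Φu z + Pu (ivec d p))) := by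
      simp only [h1]
      exact (hΦu z).add_const _
    exact tendsto_nhds_unique (hΦu (z + ivec d p)) h2
  have hΦsP : ∀ z (p : Fin d → ℤ), Φs (z + ivec d p) = Φs z + Ps (ivec d p) := by
    intro z p
    have h1 : ∀ n : ℕ, (As ^ n) (Ps (F.symm^[n] (z + ivec d p)))
        = (As ^ n) (Ps (F.symm^[n] z)) + Ps (ivec d p) := by
      intro n
      obtain ⟨q, hq1, hq2⟩ := hIterFsymm n z p
      rw [hq1, map_add, map_add, hq2]
    have h2 : Tendsto (fun n : ℕ => (As ^ n) (Ps (F.symm^[n] (z + ivec d p)))) atTop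
        (𝓝 (Φs z + Ps (ivec d p))) := by
      simp only [h1]
      exact (hΦs z).add_const _
    exact tendsto_nhds_unique (hΦs (z + ivec d p)) h2
  -- integer preservation of Au, As
  have hAuInt : ∀ p : Fin ku → ℤ, ∃ q : Fin ku → ℤ, Au (ivec ku p) = ivec ku q := by
    intro p
    set zp : Fin d → ℤ := fun i => if h : i.val < ku then p ⟨i.val, h⟩ else 0 with hzpdef
    have h1 : Pu (ivec d zp) = ivec ku p := by
      ext i
      show (ivec d zp) (Fin.castLE hkd (Fin.castLE hku i)) = (p i : ℝ)
      show ((zp (Fin.castLE hkd (Fin.castLE hku i)) : ℤ) : ℝ) = (p i : ℝ)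
      have hlt : (Fin.castLE hkd (Fin.castLE hku i) : Fin d).val < ku := i.isLt
      have h2 : zp (Fin.castLE hkd (Fin.castLE hku i)) = p i := by
        simp only [hzpdef]
        rw [dif_pos hlt]
        exact congrArg p (Fin.ext rfl)
      rw [h2]
    refine ⟨fun i => (fun i' => ∑ j, mint i' j * zp j) (Fin.castLE hkd (Fin.castLE hku i)), ?_⟩
    rw [← h1, ← hPuM' (ivec d zp), hMq]
    rfl
  have hAsInt : ∀ p : Fin (k - ku) → ℤ, ∃ q : Fin (k - ku) → ℤ,
      As (ivec (k - ku) p) = ivec (k - ku) q := by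
    intro p
    set zp : Fin d → ℤ := fun i => if h : ku ≤ i.val ∧ i.val < k then
      p ⟨i.val - ku, by omega⟩ else 0 with hzpdef
    have h1 : Ps (ivec d zp) = ivec (k - ku) p := by
      ext j
      show ((zp (Fin.castLE hkd ⟨ku + j.val, by have := j.isLt; omega⟩) : ℤ) : ℝ) = (p j : ℝ)
      have hcond : ku ≤ (Fin.castLE hkd ⟨ku + j.val, by have := j.isLt; omega⟩ : Fin d).val
          ∧ (Fin.castLE hkd ⟨ku + j.val, by have := j.isLt; omega⟩ : Fin d).val < k := by
        exact ⟨by show ku ≤ ku + j.val; omega,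
          by show ku + j.val < k; have := j.isLt; omega⟩
      have h2 : zp (Fin.castLE hkd ⟨ku + j.val, by have := j.isLt; omega⟩) = p j := by
        simp only [hzpdef]
        rw [dif_pos hcond]
        exact congrArg p (Fin.ext (show ku + (j:ℕ) - ku = (j:ℕ) by omega))
      rw [h2]
    refine ⟨fun j => (fun i' => ∑ j', mint i' j' * zp j')
      (Fin.castLE hkd ⟨ku + j.val, by have := j.isLt; omega⟩), ?_⟩
    rw [← h1, ← hPsM' (ivec d zp), hMq]
    rfl
  -- the maps on the torus
  have hFbar : ∀ z, torusProj d (F (tlift d (torusProj d z))) = torusProj d (F z) := by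
    intro z
    obtain ⟨p, hp⟩ := torus_eq_exists d (tlift d (torusProj d z)) z
      (torusProj_tlift d (torusProj d z)).symm
    rw [hp, hFadd, hMq]
    exact torus_add_int d (F z) _
  have hΦbar : ∀ z,
      ((torusProj ku (Φu (tlift d (torusProj d z))),
        torusProj (k - ku) (Φs (tlift d (torusProj d z))))
        : (Fin ku → AddCircle (1:ℝ)) × (Fin (k - ku) → AddCircle (1:ℝ)))
      = (torusProj ku (Φu z), torusProj (k - ku) (Φs z)) := by
    intro z
    obtain ⟨p, hp⟩ := torus_eq_exists d (tlift d (torusProj d z)) z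
      (torusProj_tlift d (torusProj d z)).symm
    rw [hp, hΦuP, hΦsP]
    have hPuiv : Pu (ivec d p) = ivec ku (fun i => p (Fin.castLE hkd (Fin.castLE hku i))) := rfl
    have hPsiv : Ps (ivec d p) = ivec (k - ku)
      (fun j => p (Fin.castLE hkd ⟨ku + j.val, by have := j.isLt; omega⟩)) := rfl
    rw [hPuiv, hPsiv, torus_add_int, torus_add_int]
  have hAbar : ∀ (x : EuclideanSpace ℝ (Fin ku)) (y : EuclideanSpace ℝ (Fin (k - ku))),
      ((torusProj ku (Au (tlift ku (torusProj ku x))),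
        torusProj (k - ku) (As (tlift (k - ku) (torusProj (k - ku) y))))
        : (Fin ku → AddCircle (1:ℝ)) × (Fin (k - ku) → AddCircle (1:ℝ)))
      = (torusProj ku (Au x), torusProj (k - ku) (As y)) := by
    intro x y
    obtain ⟨px, hpx⟩ := torus_eq_exists ku (tlift ku (torusProj ku x)) x
      (torusProj_tlift ku (torusProj ku x)).symm
    obtain ⟨py, hpy⟩ := torus_eq_exists (k - ku) (tlift (k - ku) (torusProj (k - ku) y)) y
      (torusProj_tlift (k - ku) (torusProj (k - ku) y)).symm
    rw [hpx, hpy, map_add, map_add]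
    obtain ⟨qx, hqx⟩ := hAuInt px
    obtain ⟨qy, hqy⟩ := hAsInt py
    rw [hqx, hqy, torus_add_int, torus_add_int]
  refine ⟨Φu, Φs, hΦu, hΦs, hΦuc, hΦsc, hΦuF, hΦsF,
    (fun z p => hΦuP z p), (fun z p => hΦsP z p),
    (fun θ => torusProj d (F (tlift d θ))),
    (fun θ => (torusProj ku (Φu (tlift d θ)), torusProj (k - ku) (Φs (tlift d θ)))),
    (fun xy => (torusProj ku (Au (tlift ku xy.1)),
      torusProj (k - ku) (As (tlift (k - ku) xy.2)))),
    hFbar, hΦbar, hAbar, ?_⟩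
  intro θ
  show (torusProj ku (Φu (tlift d (torusProj d (F (tlift d θ))))),
        torusProj (k - ku) (Φs (tlift d (torusProj d (F (tlift d θ)))))) =
       (torusProj ku (Au (tlift ku (torusProj ku (Φu (tlift d θ))))),
        torusProj (k - ku) (As (tlift (k - ku) (torusProj (k - ku) (Φs (tlift d θ))))))
  rw [hΦbar (F (tlift d θ)), hAbar (Φu (tlift d θ)) (Φs (tlift d θ)), hΦuF, hΦsF]
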